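/- In a cube complex of dimension at most n with the l∞ metric, there is a constant α > 0 (depending only on n) such that every taut m-string Σ satisfies l(Σ) ≥ αm − 1. -/

import Mathlib

open scoped ENNReal

/-- A point of `ℝ^n` lying in the unit cube `[0,1]^n`. -/
def InUnitCube {n : ℕ} (x : Fin n → ℝ) : Prop := ∀ l, x l ∈ Set.Icc (0 : ℝ) 1

/-- A face of the cube `[0,1]^n` is encoded by `c : Fin n → Option Bool`:
`some b` freezes the coordinate at `0` or `1`, `none` leaves it free. -/
def facePoints {n : ℕ} (c : Fin n → Option Bool) : Set (Fin n → ℝ) :=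
  {x | ∀ l, (∀ b, c l = some b → x l = (if b then 1 else 0)) ∧
            (c l = none → x l ∈ Set.Icc (0 : ℝ) 1)}

/-- A cubical isometry between faces of cubes: a bijection of the free coordinates
together with possible reflections. Such maps are isometries for every `l_p`-norm. -/
def IsCubicalIso {n₁ n₂ : ℕ} (c₁ : Fin n₁ → Option Bool) (c₂ : Fin n₂ → Option Bool)
    (h : (Fin n₁ → ℝ) → (Fin n₂ → ℝ)) : Prop :=
  ∃ (σ : {l₂ : Fin n₂ // c₂ l₂ = none} → {l₁ : Fin n₁ // c₁ l₁ = none})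
    (fl : {l₂ : Fin n₂ // c₂ l₂ = none} → Bool),
    Function.Bijective σ ∧
    ∀ x ∈ facePoints c₁,
      (∀ l₂ b, c₂ l₂ = some b → h x l₂ = (if b then 1 else 0)) ∧
      (∀ (l₂ : Fin n₂) (hl : c₂ l₂ = none),
        h x l₂ = if fl ⟨l₂, hl⟩ then 1 - x (σ ⟨l₂, hl⟩).1 else x (σ ⟨l₂, hl⟩).1)

/-- A cube complex: a family of unit cubes glued along faces by cubical isometries.
The relation `rel` identifies points of the disjoint union of the cubes; it is an
equivalence relation on the points of the unit cubes, injective on each cube, and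
any two glued cubes are glued along a pair of faces via a cubical isometry. -/
structure CubeComplex where
  idx : Type
  dim : idx → ℕ
  rel : (Σ i : idx, Fin (dim i) → ℝ) → (Σ i : idx, Fin (dim i) → ℝ) → Prop
  rel_inCube : ∀ a b, rel a b → InUnitCube a.2 ∧ InUnitCube b.2
  rel_refl : ∀ a : Σ i : idx, Fin (dim i) → ℝ, InUnitCube a.2 → rel a a
  rel_symm : ∀ a b, rel a b → rel b a
  rel_trans : ∀ a b c, rel a b → rel b c → rel a c
  rel_inj : ∀ (i : idx) (x y : Fin (dim i) → ℝ), rel ⟨i, x⟩ ⟨i, y⟩ → x = y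
  rel_glue : ∀ i j : idx, (∃ x y, rel ⟨i, x⟩ ⟨j, y⟩) →
    ∃ (c₁ : Fin (dim i) → Option Bool) (c₂ : Fin (dim j) → Option Bool)
      (h : (Fin (dim i) → ℝ) → (Fin (dim j) → ℝ)),
      IsCubicalIso c₁ c₂ h ∧
      ∀ x y, InUnitCube x → InUnitCube y →
        (rel ⟨i, x⟩ ⟨j, y⟩ ↔ x ∈ facePoints c₁ ∧ h x = y)

namespace CubeComplex

variable (C : CubeComplex)

/-- The points of the cubes of the complex. -/
def PrePt : Type := {a : Σ i : C.idx, Fin (C.dim i) → ℝ // InUnitCube a.2}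

/-- The gluing equivalence relation as a setoid. -/
def setoid : Setoid C.PrePt :=
  ⟨fun a b => C.rel a.1 b.1,
    ⟨fun a => C.rel_refl a.1 a.2, fun h => C.rel_symm _ _ h,
      fun h h' => C.rel_trans _ _ _ h h'⟩⟩

/-- The geometric realization `|𝒞|` of the cube complex. -/
def Pts : Type := Quotient C.setoid

/-- The point of `|𝒞|` given by coordinates `x` in the cube `i`. -/
def pt (i : C.idx) (x : Fin (C.dim i) → ℝ) (hx : InUnitCube x) : C.Pts :=
  Quotient.mk C.setoid ⟨⟨i, x⟩, hx⟩

end CubeComplex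

/-- The `l_p` distance on `ℝ^n`, `p ∈ [1,∞]`. -/
noncomputable def lpDist (p : ℝ≥0∞) {n : ℕ} (x y : Fin n → ℝ) : ℝ :=
  if p = ∞ then ⨆ l, |x l - y l|
  else (∑ l, |x l - y l| ^ p.toReal) ^ (1 / p.toReal)

namespace CubeComplex

variable (C : CubeComplex)

/-- A string from `a` to `b` whose segments lie in cubes indexed in `A`: a chain of
pairs of points, each pair lying in a common cube, consecutive pairs matching up. -/
structure StringIn (A : Set C.idx) (a b : C.Pts) where
  m : ℕ
  cube : Fin m → C.idx
  s : ∀ k : Fin m, Fin (C.dim (cube k)) → ℝ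
  e : ∀ k : Fin m, Fin (C.dim (cube k)) → ℝ
  hs : ∀ k, InUnitCube (s k)
  he : ∀ k, InUnitCube (e k)
  hA : ∀ k, cube k ∈ A
  hnil : m = 0 → a = b
  hstart : ∀ h0 : 0 < m, C.pt (cube ⟨0, h0⟩) (s ⟨0, h0⟩) (hs ⟨0, h0⟩) = a
  hend : ∀ h0 : 0 < m,
    C.pt (cube ⟨m - 1, Nat.sub_lt h0 Nat.one_pos⟩) (e ⟨m - 1, Nat.sub_lt h0 Nat.one_pos⟩)
      (he ⟨m - 1, Nat.sub_lt h0 Nat.one_pos⟩) = b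
  hlink : ∀ (k : ℕ) (h1 : k + 1 < m),
    C.pt (cube ⟨k, Nat.lt_of_succ_lt h1⟩) (e ⟨k, Nat.lt_of_succ_lt h1⟩)
        (he ⟨k, Nat.lt_of_succ_lt h1⟩) =
      C.pt (cube ⟨k + 1, h1⟩) (s ⟨k + 1, h1⟩) (hs ⟨k + 1, h1⟩)

/-- The `l_p`-length of a string. -/
noncomputable def StringIn.length {C : CubeComplex} {A : Set C.idx} {a b : C.Pts}
    (p : ℝ≥0∞) (S : C.StringIn A a b) : ℝ :=
  ∑ k : Fin S.m, lpDist p (S.s k) (S.e k)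

/-- The induced length metric restricted to strings in the cubes indexed by `A`. -/
noncomputable def distIn (p : ℝ≥0∞) (A : Set C.idx) (a b : C.Pts) : ℝ :=
  sInf {r | ∃ S : C.StringIn A a b, S.length p = r}

/-- The induced length metric `d_p` on `|𝒞|`. -/
noncomputable def stringDist (p : ℝ≥0∞) (a b : C.Pts) : ℝ :=
  C.distIn p Set.univ a b

/-- The complex has dimension at most `n`. -/
def DimLE (n : ℕ) : Prop := ∀ i, C.dim i ≤ n

end CubeComplex

namespace CubeComplex

variable (C : CubeComplex)

/-- A taut `m`-string `(x₀,…,x_m)` in a cube complex with the `l_∞` metric on the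
cubes.  For each `k`, `s k` and `e k` are the coordinates of `x_k` and `x_{k+1}`
in the maximal cube `cube k` containing both.  The coordinates of consecutive
cubes are matched along their common face by `σ` (with the common face placed at
the origin, so unmatched "new" coordinates vanish at `x_{k+1}`).  Tautness:
(i) no cube contains three consecutive points, (ii) each `x_{k+1}` lies on a
shortest path from `x_k` to `x_{k+2}` inside the union of the two adjacent cubes,
and (iii) the coordinates are monotone along the string. -/
structure TautString (m : ℕ) where
  cube : Fin m → C.idx
  s : ∀ k : Fin m, Fin (C.dim (cube k)) → ℝ
  e : ∀ k : Fin m, Fin (C.dim (cube k)) → ℝ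
  hs : ∀ k, InUnitCube (s k)
  he : ∀ k, InUnitCube (e k)
  /-- consecutive segments match up in the realization -/
  hlink : ∀ (k : ℕ) (h1 : k + 1 < m),
    C.rel ⟨cube ⟨k, Nat.lt_of_succ_lt h1⟩, e ⟨k, Nat.lt_of_succ_lt h1⟩⟩
      ⟨cube ⟨k + 1, h1⟩, s ⟨k + 1, h1⟩⟩
  /-- each cube is a maximal cube containing its two points -/
  hmax : ∀ (k : Fin m) (j : C.idx) (u v : Fin (C.dim j) → ℝ),
    C.rel ⟨j, u⟩ ⟨cube k, s k⟩ → C.rel ⟨j, v⟩ ⟨cube k, e k⟩ →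
      C.dim j ≤ C.dim (cube k)
  /-- the coordinate matching along the common face of consecutive cubes -/
  σ : ∀ (k : ℕ) (h1 : k + 1 < m),
    Fin (C.dim (cube ⟨k + 1, h1⟩)) → Option (Fin (C.dim (cube ⟨k, Nat.lt_of_succ_lt h1⟩)))
  hσinj : ∀ (k : ℕ) (h1 : k + 1 < m) (l l' : Fin (C.dim (cube ⟨k + 1, h1⟩))) l₀,
    σ k h1 l = some l₀ → σ k h1 l' = some l₀ → l = l'
  /-- matched coordinates of `x_{k+1}` agree in both cubes; new coordinates are 0 -/
  hcoord : ∀ (k : ℕ) (h1 : k + 1 < m) (l : Fin (C.dim (cube ⟨k + 1, h1⟩))),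
    (σ k h1 l = none → s ⟨k + 1, h1⟩ l = 0) ∧
    ∀ l₀, σ k h1 l = some l₀ → s ⟨k + 1, h1⟩ l = e ⟨k, Nat.lt_of_succ_lt h1⟩ l₀
  /-- the face of the new cube where all new coordinates vanish is the glued face -/
  hface : ∀ (k : ℕ) (h1 : k + 1 < m) (x : Fin (C.dim (cube ⟨k + 1, h1⟩)) → ℝ),
    InUnitCube x → (∀ l, σ k h1 l = none → x l = 0) →
      ∃ x' : Fin (C.dim (cube ⟨k, Nat.lt_of_succ_lt h1⟩)) → ℝ, InUnitCube x' ∧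
        C.rel ⟨cube ⟨k, Nat.lt_of_succ_lt h1⟩, x'⟩ ⟨cube ⟨k + 1, h1⟩, x⟩ ∧
        ∀ l l₀, σ k h1 l = some l₀ → x' l₀ = x l
  /-- (iii) monotone coordinates -/
  hmono : ∀ (k : Fin m) (l : Fin (C.dim (cube k))), s k l ≤ e k l
  /-- (i) no cube contains three consecutive points of the string -/
  hno3 : ∀ (k : ℕ) (h1 : k + 1 < m),
    ¬ ∃ (j : C.idx) (u v w : Fin (C.dim j) → ℝ),
      C.rel ⟨j, u⟩ ⟨cube ⟨k, Nat.lt_of_succ_lt h1⟩, s ⟨k, Nat.lt_of_succ_lt h1⟩⟩ ∧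
      C.rel ⟨j, v⟩ ⟨cube ⟨k + 1, h1⟩, s ⟨k + 1, h1⟩⟩ ∧
      C.rel ⟨j, w⟩ ⟨cube ⟨k + 1, h1⟩, e ⟨k + 1, h1⟩⟩
  /-- (ii) `x_{k+1}` lies in the interval `I_{L}(x_k, x_{k+2})` for the length
  metric of `L`, the union of the two consecutive cubes -/
  hinterval : ∀ (k : ℕ) (h1 : k + 1 < m),
    C.distIn ⊤ {cube ⟨k, Nat.lt_of_succ_lt h1⟩, cube ⟨k + 1, h1⟩}
        (C.pt (cube ⟨k, Nat.lt_of_succ_lt h1⟩) (s ⟨k, Nat.lt_of_succ_lt h1⟩)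
          (hs ⟨k, Nat.lt_of_succ_lt h1⟩))
        (C.pt (cube ⟨k + 1, h1⟩) (s ⟨k + 1, h1⟩) (hs ⟨k + 1, h1⟩)) +
      C.distIn ⊤ {cube ⟨k, Nat.lt_of_succ_lt h1⟩, cube ⟨k + 1, h1⟩}
        (C.pt (cube ⟨k + 1, h1⟩) (s ⟨k + 1, h1⟩) (hs ⟨k + 1, h1⟩))
        (C.pt (cube ⟨k + 1, h1⟩) (e ⟨k + 1, h1⟩) (he ⟨k + 1, h1⟩)) =
    C.distIn ⊤ {cube ⟨k, Nat.lt_of_succ_lt h1⟩, cube ⟨k + 1, h1⟩}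
        (C.pt (cube ⟨k, Nat.lt_of_succ_lt h1⟩) (s ⟨k, Nat.lt_of_succ_lt h1⟩)
          (hs ⟨k, Nat.lt_of_succ_lt h1⟩))
        (C.pt (cube ⟨k + 1, h1⟩) (e ⟨k + 1, h1⟩) (he ⟨k + 1, h1⟩))

/-- The `l_∞`-length of a taut string. -/
noncomputable def TautString.length {C : CubeComplex} {m : ℕ} (T : C.TautString m) : ℝ :=
  ∑ k : Fin m, lpDist ⊤ (T.s k) (T.e k)

end CubeComplex

section TautAux

lemma lpDist_top_nonneg {d : ℕ} (x y : Fin d → ℝ) : 0 ≤ lpDist ⊤ x y := by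
  rw [lpDist, if_pos rfl]
  exact Real.iSup_nonneg fun l => abs_nonneg _

lemma abs_le_lpDist_top {d : ℕ} (x y : Fin d → ℝ) (l : Fin d) :
    |x l - y l| ≤ lpDist ⊤ x y := by
  rw [lpDist, if_pos rfl]
  exact le_ciSup (f := fun l => |x l - y l|) (Set.Finite.bddAbove (Set.finite_range _)) l

open Classical in
/-- one forward step of a coordinate thread: from coordinate `l` of cube `j`
to the coordinate of cube `j+1` matched to it by `σ`, if any. -/
noncomputable def CubeComplex.TautString.step {C : CubeComplex} {m : ℕ}
    (T : C.TautString m) (j l : ℕ) : Option ℕ :=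
  if h : j + 1 < m then
    if hl : l < C.dim (T.cube ⟨j, Nat.lt_of_succ_lt h⟩) then
      if hex : ∃ l' : Fin (C.dim (T.cube ⟨j + 1, h⟩)), T.σ j h l' = some ⟨l, hl⟩ then
        some (hex.choose : Fin _).1
      else none
    else none
  else none

/-- the coordinate thread starting at coordinate `l0` of cube `j0`; value at
index `d` is the matched coordinate in cube `j0 + d`. -/
noncomputable def CubeComplex.TautString.thr {C : CubeComplex} {m : ℕ}
    (T : C.TautString m) (j0 l0 : ℕ) : ℕ → Option ℕ
  | 0 => some l0
  | d + 1 => (T.thr j0 l0 d).bind fun l => T.step (j0 + d) l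

lemma CubeComplex.TautString.thr_succ {C : CubeComplex} {m : ℕ}
    (T : C.TautString m) (j0 l0 d : ℕ) :
    T.thr j0 l0 (d + 1) = (T.thr j0 l0 d).bind fun l => T.step (j0 + d) l := rfl

lemma CubeComplex.TautString.step_eq_some_iff {C : CubeComplex} {m : ℕ}
    (T : C.TautString m) {j l l' : ℕ} :
    T.step j l = some l' ↔ ∃ (h : j + 1 < m)
      (hl : l < C.dim (T.cube ⟨j, Nat.lt_of_succ_lt h⟩))
      (hl' : l' < C.dim (T.cube ⟨j + 1, h⟩)),
      T.σ j h ⟨l', hl'⟩ = some ⟨l, hl⟩ := by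
  constructor
  · intro hs
    by_cases h : j + 1 < m
    · by_cases hl : l < C.dim (T.cube ⟨j, Nat.lt_of_succ_lt h⟩)
      · by_cases hex : ∃ l'' : Fin (C.dim (T.cube ⟨j + 1, h⟩)), T.σ j h l'' = some ⟨l, hl⟩
        · simp only [CubeComplex.TautString.step, dif_pos h, dif_pos hl, dif_pos hex,
            Option.some.injEq] at hs
          refine ⟨h, hl, hs ▸ hex.choose.isLt, ?_⟩
          have := hex.choose_spec
          subst hs
          simpa [Fin.eta] using this
        · simp [CubeComplex.TautString.step, dif_pos h, dif_pos hl, dif_neg hex] at hs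
      · simp [CubeComplex.TautString.step, dif_pos h, dif_neg hl] at hs
    · simp [CubeComplex.TautString.step, dif_neg h] at hs
  · rintro ⟨h, hl, hl', hσ⟩
    have hex : ∃ l'' : Fin (C.dim (T.cube ⟨j + 1, h⟩)), T.σ j h l'' = some ⟨l, hl⟩ :=
      ⟨⟨l', hl'⟩, hσ⟩
    simp only [CubeComplex.TautString.step, dif_pos h, dif_pos hl, dif_pos hex,
      Option.some.injEq]
    have := T.hσinj j h hex.choose ⟨l', hl'⟩ ⟨l, hl⟩ hex.choose_spec hσ
    rw [this]

end TautAux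
section TautAux2
namespace CubeComplex.TautString

variable {C : CubeComplex} {m : ℕ} (T : C.TautString m)

lemma thr_spec {j0 l0 : ℕ} (hj0 : j0 < m) (hl0 : l0 < C.dim (T.cube ⟨j0, hj0⟩))
    (he0 : T.e ⟨j0, hj0⟩ ⟨l0, hl0⟩ = 1) :
    ∀ (d l : ℕ), T.thr j0 l0 d = some l → ∀ (j : ℕ), j = j0 + d →
      ∃ (hj : j < m) (hl : l < C.dim (T.cube ⟨j, hj⟩)),
        T.e ⟨j, hj⟩ ⟨l, hl⟩ = 1 ∧ (0 < d → T.s ⟨j, hj⟩ ⟨l, hl⟩ = 1) := by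
  intro d
  induction d with
  | zero =>
    intro l hthr j hjeq
    obtain rfl : l0 = l := Option.some.inj hthr
    subst hjeq
    exact ⟨hj0, hl0, he0, by omega⟩
  | succ d ih =>
    intro l hthr j hjeq
    subst hjeq
    rw [thr_succ] at hthr
    obtain ⟨a, ha, hstep⟩ := Option.bind_eq_some_iff.mp hthr
    obtain ⟨h1, hla, hl, hσ⟩ := step_eq_some_iff T |>.mp hstep
    obtain ⟨hja, hla', hea, -⟩ := ih a ha (j0 + d) rfl
    have hsv : T.s ⟨j0 + d + 1, h1⟩ ⟨l, hl⟩
        = T.e ⟨j0 + d, Nat.lt_of_succ_lt h1⟩ ⟨a, hla⟩ :=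
      (T.hcoord (j0 + d) h1 ⟨l, hl⟩).2 ⟨a, hla⟩ hσ
    have hs1 : T.s ⟨j0 + d + 1, h1⟩ ⟨l, hl⟩ = 1 := by rw [hsv]; exact hea
    have hle : T.s ⟨j0 + d + 1, h1⟩ ⟨l, hl⟩ ≤ T.e ⟨j0 + d + 1, h1⟩ ⟨l, hl⟩ :=
      T.hmono ⟨j0 + d + 1, h1⟩ ⟨l, hl⟩
    have hub := (T.he ⟨j0 + d + 1, h1⟩ ⟨l, hl⟩).2
    refine ⟨h1, hl, ?_, fun _ => hs1⟩
    show T.e ⟨j0 + d + 1, h1⟩ ⟨l, hl⟩ = 1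
    linarith

lemma exists_thr_none (j0 l0 : ℕ) : ∃ d, T.thr j0 l0 (d + 1) = none := by
  by_contra h
  push_neg at h
  obtain ⟨l, hl⟩ := Option.ne_none_iff_exists'.mp (h m)
  obtain ⟨a, -, hstep⟩ := Option.bind_eq_some_iff.mp hl
  obtain ⟨h1, -⟩ := step_eq_some_iff T |>.mp hstep
  omega

lemma step_inj {j a b c : ℕ} (ha : T.step j a = some c) (hb : T.step j b = some c) :
    a = b := by
  obtain ⟨h1, hla, hlc, hσa⟩ := step_eq_some_iff T |>.mp ha
  obtain ⟨h1', hlb, hlc', hσb⟩ := step_eq_some_iff T |>.mp hb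
  have h2 : (⟨a, hla⟩ : Fin (C.dim (T.cube ⟨j, Nat.lt_of_succ_lt h1⟩)))
      = ⟨b, hlb⟩ := Option.some.inj (hσa.symm.trans hσb)
  exact congrArg Fin.val h2

lemma thr_back (j0 l0 j0' l0' : ℕ) :
    ∀ (d₂ d₁ l : ℕ), d₂ ≤ d₁ → j0 + d₁ = j0' + d₂ →
      T.thr j0 l0 d₁ = some l → T.thr j0' l0' d₂ = some l →
      T.thr j0 l0 (d₁ - d₂) = some l0' := by
  intro d₂
  induction d₂ with
  | zero =>
    intro d₁ l _ _ h1 h2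
    obtain rfl : l0' = l := Option.some.inj h2
    simpa using h1
  | succ d₂ ih =>
    intro d₁ l hle hseg h1 h2
    obtain ⟨e0, rfl⟩ : ∃ e0, d₁ = e0 + 1 := ⟨d₁ - 1, by omega⟩
    rw [thr_succ] at h1 h2
    obtain ⟨a, ha, hsa⟩ := Option.bind_eq_some_iff.mp h1
    obtain ⟨b, hb, hsb⟩ := Option.bind_eq_some_iff.mp h2
    have hsegs : j0 + e0 = j0' + d₂ := by omega
    rw [hsegs] at hsa
    obtain rfl : a = b := step_inj T hsa hsb
    have := ih e0 a (by omega) hsegs ha hb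
    simpa [Nat.succ_sub_succ] using this

end CubeComplex.TautString
end TautAux2
section TautAux3
namespace CubeComplex.TautString

variable {C : CubeComplex} {m : ℕ} (T : C.TautString m)

lemma claimA (k : ℕ) (hk : k + 1 + 1 < m) :
    ∃ l : Fin (C.dim (T.cube ⟨k + 1, Nat.lt_of_succ_lt hk⟩)),
      T.s ⟨k + 1, Nat.lt_of_succ_lt hk⟩ l < 1 ∧ T.e ⟨k + 1, Nat.lt_of_succ_lt hk⟩ l = 1 := by
  have hk1 : k + 1 < m := Nat.lt_of_succ_lt hk
  have hrel := T.hlink (k + 1) hk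
  obtain ⟨c₁, c₂, h, hiso, hiff⟩ := C.rel_glue _ _ ⟨_, _, hrel⟩
  have hmem := (hiff _ _ (T.he ⟨k + 1, hk1⟩) (T.hs ⟨k + 1 + 1, hk⟩)).mp hrel
  have hnotmem : T.s ⟨k + 1, hk1⟩ ∉ facePoints c₁ := by
    intro hin
    obtain ⟨σ', fl, hbij, hmap⟩ := hiso
    have hcube : InUnitCube (h (T.s ⟨k + 1, hk1⟩)) := by
      intro l₂
      rcases hc : c₂ l₂ with _ | b
      · have heq := (hmap _ hin).2 l₂ hc
        rw [heq]
        have h01 := T.hs ⟨k + 1, hk1⟩ (σ' ⟨l₂, hc⟩).1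
        constructor
        · split <;> [skip; exact h01.1]
          linarith [h01.2]
        · split <;> [skip; exact h01.2]
          linarith [h01.1]
      · have heq := (hmap _ hin).1 l₂ b hc
        rw [heq]
        split <;> norm_num
    have hrel2 : C.rel ⟨_, T.s ⟨k + 1, hk1⟩⟩ ⟨_, h (T.s ⟨k + 1, hk1⟩)⟩ :=
      (hiff _ _ (T.hs ⟨k + 1, hk1⟩) hcube).mpr ⟨hin, rfl⟩
    exact T.hno3 (k + 1) hk ⟨_, h (T.s ⟨k + 1, hk1⟩), T.s ⟨k + 1 + 1, hk⟩, T.e ⟨k + 1 + 1, hk⟩,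
      C.rel_symm _ _ hrel2, C.rel_refl _ (T.hs ⟨k + 1 + 1, hk⟩),
      C.rel_refl _ (T.he ⟨k + 1 + 1, hk⟩)⟩
  rw [facePoints, Set.mem_setOf_eq] at hnotmem
  push_neg at hnotmem
  obtain ⟨l, hbad⟩ := hnotmem
  have hA : ¬ ∀ b, c₁ l = some b → T.s ⟨k + 1, hk1⟩ l = if b = true then 1 else 0 :=
    fun hA0 => (hbad hA0).2 (T.hs ⟨k + 1, hk1⟩ l)
  push_neg at hA
  obtain ⟨b, hcb, hne⟩ := hA
  · have he1 : T.e ⟨k + 1, hk1⟩ l = if b then 1 else 0 := (hmem.1 l).1 b hcb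
    have hmono := T.hmono ⟨k + 1, hk1⟩ l
    have hs0 := (T.hs ⟨k + 1, hk1⟩ l).1
    cases b with
    | false =>
      exfalso
      simp only [Bool.false_eq_true, if_false] at he1 hne
      apply hne
      linarith [he1 ▸ hmono]
    | true =>
      simp only [if_pos rfl, if_true] at he1 hne
      exact ⟨l, lt_of_le_of_ne (he1 ▸ hmono) hne, he1⟩

end CubeComplex.TautString
end TautAux3
section TautAux4
namespace CubeComplex.TautString

variable {C : CubeComplex} {m : ℕ} (T : C.TautString m)

lemma endpoint (k : ℕ) (hk : k + 1 + 1 < m) :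
    ∃ p : ℕ × ℕ, ∃ (hj : p.1 < m) (hl : p.2 < C.dim (T.cube ⟨p.1, hj⟩)),
      T.e ⟨p.1, hj⟩ ⟨p.2, hl⟩ = 1 ∧
      (p.1 + 1 = m ∨ ∀ (h1 : p.1 + 1 < m) (l' : Fin (C.dim (T.cube ⟨p.1 + 1, h1⟩))),
          T.σ p.1 h1 l' ≠ some ⟨p.2, hl⟩) ∧
      ∃ (d lk : ℕ) (hlk : lk < C.dim (T.cube ⟨k + 1, Nat.lt_of_succ_lt hk⟩)),
        p.1 = k + 1 + d ∧ T.thr (k + 1) lk d = some p.2 ∧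
        T.s ⟨k + 1, Nat.lt_of_succ_lt hk⟩ ⟨lk, hlk⟩ < 1 ∧
        T.e ⟨k + 1, Nat.lt_of_succ_lt hk⟩ ⟨lk, hlk⟩ = 1 := by
  obtain ⟨lk, hslt, hse⟩ := claimA T k hk
  have hex := exists_thr_none T (k + 1) lk.1
  set d := Nat.find hex with hd
  have hstop : T.thr (k + 1) lk.1 (d + 1) = none := Nat.find_spec hex
  have hdef : ∃ l, T.thr (k + 1) lk.1 d = some l := by
    rcases Nat.eq_zero_or_pos d with h0 | h0
    · rw [h0]; exact ⟨lk.1, rfl⟩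
    · have hne := Nat.find_min hex (show d - 1 < d by omega)
      have heq : d - 1 + 1 = d := by omega
      rw [heq] at hne
      exact Option.ne_none_iff_exists'.mp hne
  obtain ⟨lE, hlE⟩ := hdef
  obtain ⟨hjE, hlEd, heE, -⟩ :=
    thr_spec T (Nat.lt_of_succ_lt hk) lk.isLt hse d lE hlE (k + 1 + d) rfl
  have hstep_none : T.step (k + 1 + d) lE = none := by
    have h' := hstop
    rw [thr_succ, hlE] at h'
    simpa using h'
  refine ⟨(k + 1 + d, lE), hjE, hlEd, heE, ?_, d, lk.1, lk.isLt, rfl, hlE, hslt, hse⟩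
  by_cases h1 : k + 1 + d + 1 < m
  · right
    intro h1' l' hσ
    have hsome : T.step (k + 1 + d) lE = some l'.1 :=
      (step_eq_some_iff T).mpr ⟨h1', hlEd, l'.isLt, hσ⟩
    rw [hstep_none] at hsome
    cases hsome
  · left; omega

end CubeComplex.TautString
end TautAux4
section TautAux5
namespace CubeComplex.TautString

variable {C : CubeComplex} {m : ℕ} (T : C.TautString m)

lemma no_cross (k₁ k₂ : ℕ) (hk₁ : k₁ + 1 + 1 < m) (hk₂ : k₂ + 1 + 1 < m) (hlt : k₂ < k₁)
    (d₁ d₂ lk₁ lk₂ lE : ℕ)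
    (hlk₁ : lk₁ < C.dim (T.cube ⟨k₁ + 1, Nat.lt_of_succ_lt hk₁⟩))
    (hlk₂ : lk₂ < C.dim (T.cube ⟨k₂ + 1, Nat.lt_of_succ_lt hk₂⟩))
    (hth₁ : T.thr (k₁ + 1) lk₁ d₁ = some lE)
    (hth₂ : T.thr (k₂ + 1) lk₂ d₂ = some lE)
    (hseg : k₁ + 1 + d₁ = k₂ + 1 + d₂)
    (hs₁ : T.s ⟨k₁ + 1, Nat.lt_of_succ_lt hk₁⟩ ⟨lk₁, hlk₁⟩ < 1)
    (he₂ : T.e ⟨k₂ + 1, Nat.lt_of_succ_lt hk₂⟩ ⟨lk₂, hlk₂⟩ = 1) : False := by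
  have hle : d₁ ≤ d₂ := by omega
  have hback := thr_back T (k₂ + 1) lk₂ (k₁ + 1) lk₁ d₁ d₂ lE hle (by omega) hth₂ hth₁
  obtain ⟨hj, hl, -, hsfun⟩ :=
    thr_spec T (Nat.lt_of_succ_lt hk₂) hlk₂ he₂ (d₂ - d₁) lk₁ hback (k₁ + 1) (by omega)
  have hval := hsfun (by omega)
  exact absurd hval (ne_of_lt hs₁)

end CubeComplex.TautString
end TautAux5
section TautAux6
namespace CubeComplex.TautString

open Finset in
lemma sum_s_eq {C : CubeComplex} {m : ℕ} (T : C.TautString m) (j : ℕ) (hj1 : j + 1 < m) :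
    ∑ l', T.s ⟨j + 1, hj1⟩ l' =
      ∑ l ∈ Finset.univ.filter
        (fun l : Fin (C.dim (T.cube ⟨j, Nat.lt_of_succ_lt hj1⟩)) =>
          ∃ l', T.σ j hj1 l' = some l),
        T.e ⟨j, Nat.lt_of_succ_lt hj1⟩ l := by
  classical
  have hcard : ∀ l : Fin (C.dim (T.cube ⟨j, Nat.lt_of_succ_lt hj1⟩)),
      (Finset.univ.filter (fun l' => T.σ j hj1 l' = some l)).card
        = if ∃ l', T.σ j hj1 l' = some l then 1 else 0 := by
    intro l
    split
    case isTrue h =>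
      rw [Finset.card_eq_one]
      refine ⟨h.choose, ?_⟩
      rw [Finset.eq_singleton_iff_unique_mem]
      refine ⟨Finset.mem_filter.mpr ⟨Finset.mem_univ _, h.choose_spec⟩, ?_⟩
      intro b hb
      exact T.hσinj j hj1 b h.choose l (Finset.mem_filter.mp hb).2 h.choose_spec
    case isFalse h =>
      rw [Finset.card_eq_zero, Finset.eq_empty_iff_forall_notMem]
      intro b hb
      exact h ⟨b, (Finset.mem_filter.mp hb).2⟩
  have hinner : ∀ l : Fin (C.dim (T.cube ⟨j, Nat.lt_of_succ_lt hj1⟩)),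
      (∑ l', if T.σ j hj1 l' = some l then T.e ⟨j, Nat.lt_of_succ_lt hj1⟩ l else 0)
        = if ∃ l', T.σ j hj1 l' = some l then T.e ⟨j, Nat.lt_of_succ_lt hj1⟩ l else 0 := by
    intro l
    rw [← Finset.sum_filter, Finset.sum_const, hcard l]
    split <;> simp
  calc ∑ l', T.s ⟨j + 1, hj1⟩ l'
      = ∑ l', ∑ l, (if T.σ j hj1 l' = some l then T.e ⟨j, Nat.lt_of_succ_lt hj1⟩ l else 0) := by
        refine Finset.sum_congr rfl fun l' _ => ?_
        rcases hσ : T.σ j hj1 l' with _ | l₀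
        · rw [(T.hcoord j hj1 l').1 hσ]
          symm
          apply Finset.sum_eq_zero
          intro l _
          simp
        · rw [(T.hcoord j hj1 l').2 l₀ hσ]
          symm
          simp only [Option.some.injEq]
          rw [Finset.sum_ite_eq Finset.univ l₀ (fun l => T.e ⟨j, Nat.lt_of_succ_lt hj1⟩ l)]
          simp
    _ = ∑ l, ∑ l', (if T.σ j hj1 l' = some l then T.e ⟨j, Nat.lt_of_succ_lt hj1⟩ l else 0) :=
        Finset.sum_comm
    _ = ∑ l, (if ∃ l', T.σ j hj1 l' = some l then T.e ⟨j, Nat.lt_of_succ_lt hj1⟩ l else 0) :=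
        Finset.sum_congr rfl fun l _ => hinner l
    _ = _ := (Finset.sum_filter _ _).symm

end CubeComplex.TautString
end TautAux6
section TautAux7
namespace CubeComplex.TautString

open Finset in
lemma fiber_bound {C : CubeComplex} {m : ℕ} (T : C.TautString m) (j : ℕ) (hj1 : j + 1 < m)
    (F : Finset (ℕ × ℕ))
    (hF : ∀ p ∈ F, p.1 = j ∧ ∃ hl : p.2 < C.dim (T.cube ⟨j, Nat.lt_of_succ_lt hj1⟩),
      T.e ⟨j, Nat.lt_of_succ_lt hj1⟩ ⟨p.2, hl⟩ = 1 ∧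
      ∀ l', T.σ j hj1 l' ≠ some ⟨p.2, hl⟩) :
    (F.card : ℝ) ≤ (∑ l, T.e ⟨j, Nat.lt_of_succ_lt hj1⟩ l) - ∑ l', T.s ⟨j + 1, hj1⟩ l' := by
  classical
  have hBM := sum_s_eq T j hj1
  rw [hBM]
  have hsplitA := Finset.sum_filter_add_sum_filter_not Finset.univ
    (fun l : Fin (C.dim (T.cube ⟨j, Nat.lt_of_succ_lt hj1⟩)) => ∃ l', T.σ j hj1 l' = some l)
    (T.e ⟨j, Nat.lt_of_succ_lt hj1⟩)
  have hAB : (∑ l, T.e ⟨j, Nat.lt_of_succ_lt hj1⟩ l)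
      - (∑ l ∈ Finset.univ.filter
          (fun l => ∃ l', T.σ j hj1 l' = some l), T.e ⟨j, Nat.lt_of_succ_lt hj1⟩ l)
      = ∑ l ∈ Finset.univ.filter
          (fun l => ¬ ∃ l', T.σ j hj1 l' = some l), T.e ⟨j, Nat.lt_of_succ_lt hj1⟩ l := by
    rw [← hsplitA]; ring
  rw [hAB]
  set FF := (Finset.univ.filter
      (fun l : Fin (C.dim (T.cube ⟨j, Nat.lt_of_succ_lt hj1⟩)) =>
        ¬ ∃ l', T.σ j hj1 l' = some l)).filter
      (fun l => T.e ⟨j, Nat.lt_of_succ_lt hj1⟩ l = 1) with hFF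
  have hcard1 : F.card ≤ (FF.image Fin.val).card := by
    apply Finset.card_le_card_of_injOn (fun p => p.2)
    · intro p hp
      obtain ⟨hpj, hl, he1, hun⟩ := hF p hp
      exact Finset.mem_image.mpr ⟨⟨p.2, hl⟩, Finset.mem_filter.mpr
        ⟨Finset.mem_filter.mpr ⟨Finset.mem_univ _, fun ⟨l', hσ⟩ => hun l' hσ⟩, he1⟩, rfl⟩
    · intro p hp q hq h2
      have h1 : p.1 = q.1 := ((hF p hp).1).trans ((hF q hq).1).symm
      exact Prod.ext h1 h2
  have hcard2 : (FF.image Fin.val).card = FF.card :=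
    Finset.card_image_of_injective _ Fin.val_injective
  calc (F.card : ℝ) ≤ (FF.card : ℝ) := by exact_mod_cast hcard2 ▸ hcard1
    _ = ∑ _l ∈ FF, (1 : ℝ) := by simp
    _ = ∑ l ∈ FF, T.e ⟨j, Nat.lt_of_succ_lt hj1⟩ l :=
        Finset.sum_congr rfl fun l hl => ((Finset.mem_filter.mp hl).2).symm
    _ ≤ _ := Finset.sum_le_sum_of_subset_of_nonneg (Finset.filter_subset _ _)
        (fun l _ _ => (T.he ⟨j, Nat.lt_of_succ_lt hj1⟩ l).1)

end CubeComplex.TautString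
end TautAux7
section TautAux8
namespace CubeComplex.TautString

open Finset in
lemma key_count {C : CubeComplex} {m n : ℕ} (T : C.TautString m) (hC : C.DimLE n) :
    (m : ℝ) ≤ n * T.length + 2 * n + 2 := by
  classical
  have hL0 : 0 ≤ T.length :=
    Finset.sum_nonneg fun k _ => lpDist_top_nonneg _ _
  have hn0 : (0 : ℝ) ≤ n := Nat.cast_nonneg n
  rcases Nat.eq_zero_or_pos m with rfl | hm1
  · push_cast
    nlinarith
  obtain ⟨M, rfl⟩ : ∃ M, m = M + 1 := ⟨m - 1, by omega⟩
  set A : ℕ → ℝ := fun j => if hj : j < M + 1 then ∑ l, T.e ⟨j, hj⟩ l else 0 with hA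
  set B : ℕ → ℝ := fun j => if hj : j < M + 1 then ∑ l, T.s ⟨j, hj⟩ l else 0 with hB
  set δ : ℕ → ℝ := fun j =>
    if hj : j < M + 1 then lpDist ⊤ (T.s ⟨j, hj⟩) (T.e ⟨j, hj⟩) else 0 with hδ
  have hLsum : T.length = ∑ j ∈ Finset.range (M + 1), δ j := by
    rw [CubeComplex.TautString.length, ← Fin.sum_univ_eq_sum_range]
    refine Finset.sum_congr rfl fun k _ => ?_
    simp only [hδ]
    rw [dif_pos k.isLt]
  have hAB : ∀ j ∈ Finset.range (M + 1), A j - B j ≤ n * δ j := by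
    intro j hjr
    rw [Finset.mem_range] at hjr
    simp only [hA, hB, hδ, dif_pos hjr]
    rw [← Finset.sum_sub_distrib]
    have hcard : (C.dim (T.cube ⟨j, hjr⟩) : ℝ) ≤ n := by exact_mod_cast hC _
    have hd0 := lpDist_top_nonneg (T.s ⟨j, hjr⟩) (T.e ⟨j, hjr⟩)
    calc ∑ l, (T.e ⟨j, hjr⟩ l - T.s ⟨j, hjr⟩ l)
        ≤ ∑ _l : Fin (C.dim (T.cube ⟨j, hjr⟩)), lpDist ⊤ (T.s ⟨j, hjr⟩) (T.e ⟨j, hjr⟩) := by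
          refine Finset.sum_le_sum fun l _ => ?_
          have h1 := abs_le_lpDist_top (T.s ⟨j, hjr⟩) (T.e ⟨j, hjr⟩) l
          have h2 := abs_nonneg (T.s ⟨j, hjr⟩ l - T.e ⟨j, hjr⟩ l)
          have h3 := neg_abs_le (T.s ⟨j, hjr⟩ l - T.e ⟨j, hjr⟩ l)
          linarith
      _ = (C.dim (T.cube ⟨j, hjr⟩) : ℝ) * lpDist ⊤ (T.s ⟨j, hjr⟩) (T.e ⟨j, hjr⟩) := by
          rw [Finset.sum_const, Finset.card_univ, Fintype.card_fin, nsmul_eq_mul]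
      _ ≤ n * lpDist ⊤ (T.s ⟨j, hjr⟩) (T.e ⟨j, hjr⟩) :=
          mul_le_mul_of_nonneg_right hcard hd0
  have hA0 : ∀ j, 0 ≤ A j := by
    intro j
    simp only [hA]
    split
    · exact Finset.sum_nonneg fun l _ => (T.he _ l).1
    · exact le_refl 0
  have hB0 : B 0 ≤ n := by
    simp only [hB, dif_pos (Nat.succ_pos M)]
    calc ∑ l, T.s ⟨0, Nat.succ_pos M⟩ l ≤ ∑ _l : Fin (C.dim (T.cube ⟨0, Nat.succ_pos M⟩)), 1 :=
        Finset.sum_le_sum fun l _ => (T.hs _ l).2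
      _ = (C.dim (T.cube ⟨0, Nat.succ_pos M⟩) : ℝ) := by
          rw [Finset.sum_const, Finset.card_univ, Fintype.card_fin, nsmul_eq_mul, mul_one]
      _ ≤ n := by exact_mod_cast hC _
  have htel : ∑ j ∈ Finset.range M, (A j - B (j + 1)) ≤ n * T.length + n := by
    have e1 : ∑ j ∈ Finset.range (M + 1), A j = ∑ j ∈ Finset.range M, A j + A M :=
      Finset.sum_range_succ A M
    have e2 : ∑ j ∈ Finset.range (M + 1), B j = (∑ j ∈ Finset.range M, B (j + 1)) + B 0 :=
      Finset.sum_range_succ' B M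
    have e3 : ∑ j ∈ Finset.range (M + 1), (A j - B j) ≤ n * T.length := by
      calc ∑ j ∈ Finset.range (M + 1), (A j - B j) ≤ ∑ j ∈ Finset.range (M + 1), n * δ j :=
          Finset.sum_le_sum hAB
        _ = n * ∑ j ∈ Finset.range (M + 1), δ j := by rw [Finset.mul_sum]
        _ = n * T.length := by rw [hLsum]
    have e4 : ∑ j ∈ Finset.range (M + 1), (A j - B j)
        = ∑ j ∈ Finset.range (M + 1), A j - ∑ j ∈ Finset.range (M + 1), B j :=
      Finset.sum_sub_distrib _ _
    have e5 : ∑ j ∈ Finset.range M, (A j - B (j + 1))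
        = ∑ j ∈ Finset.range M, A j - ∑ j ∈ Finset.range M, B (j + 1) :=
      Finset.sum_sub_distrib _ _
    have := hA0 M
    linarith
  -- the injection from good indices to endpoints
  have Hend := fun (k : ℕ) (hk : k + 1 + 1 < M + 1) => T.endpoint k hk
  choose φ hφ using Hend
  set ψ : ℕ → ℕ × ℕ := fun k => if hk : k + 1 + 1 < M + 1 then φ k hk else (0, 0) with hψ
  set SP : ℕ × ℕ → Prop := fun p => ∃ (hj : p.1 < M + 1) (hl : p.2 < C.dim (T.cube ⟨p.1, hj⟩)),
      T.e ⟨p.1, hj⟩ ⟨p.2, hl⟩ = 1 ∧ (p.1 + 1 = M + 1 ∨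
        ∀ (h1 : p.1 + 1 < M + 1) (l' : Fin (C.dim (T.cube ⟨p.1 + 1, h1⟩))),
          T.σ p.1 h1 l' ≠ some ⟨p.2, hl⟩) with hSP
  set S : Finset (ℕ × ℕ) := (Finset.range (M + 1) ×ˢ Finset.range n).filter SP with hS
  have hψS : ∀ k ∈ Finset.range (M - 1), ψ k ∈ S := by
    intro k hkr
    rw [Finset.mem_range] at hkr
    have hk : k + 1 + 1 < M + 1 := by omega
    simp only [hψ, dif_pos hk]
    obtain ⟨hj, hl, he1, hor, -⟩ := hφ k hk
    exact Finset.mem_filter.mpr ⟨Finset.mem_product.mpr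
      ⟨Finset.mem_range.mpr hj, Finset.mem_range.mpr (lt_of_lt_of_le hl (hC _))⟩,
      hj, hl, he1, hor⟩
  have hcontra : ∀ x y (hx : x + 1 + 1 < M + 1) (hy : y + 1 + 1 < M + 1), y < x →
      φ x hx = φ y hy → False := by
    intro x y hx hy hlt heqxy
    obtain ⟨hjx, hlx, hex, horx, dx, lkx, hlkx, hpx, hthx, hsx, hex'⟩ := hφ x hx
    obtain ⟨hjy, hly, hey, hory, dy, lky, hlky, hpy, hthy, hsy, hey'⟩ := hφ y hy
    rw [← heqxy] at hthy hpy
    exact no_cross T x y hx hy hlt dx dy lkx lky (φ x hx).2 hlkx hlky hthx hthy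
      (hpx.symm.trans hpy) hsx hey'
  have hψinj : Set.InjOn ψ (Finset.range (M - 1)) := by
    intro a ha b hb heq
    simp only [Finset.coe_range, Set.mem_Iio] at ha hb
    have hak : a + 1 + 1 < M + 1 := by omega
    have hbk : b + 1 + 1 < M + 1 := by omega
    simp only [hψ, dif_pos hak, dif_pos hbk] at heq
    rcases lt_trichotomy a b with h | h | h
    · exact absurd (hcontra b a hbk hak h heq.symm) not_false
    · exact h
    · exact absurd (hcontra a b hak hbk h heq) not_false
  have hScard : (M : ℝ) - 1 ≤ (S.card : ℝ) := by
    have h1 : M - 1 ≤ S.card := by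
      have h2 := Finset.card_le_card_of_injOn ψ hψS hψinj
      simpa using h2
    rcases Nat.eq_zero_or_pos M with rfl | hM1
    · simp
      linarith [Nat.cast_nonneg (α := ℝ) S.card]
    · have : ((M - 1 : ℕ) : ℝ) = (M : ℝ) - 1 := by
        rw [Nat.cast_sub hM1]; simp
      rw [← this]
      exact_mod_cast h1
  have hsplitS : S.card = (S.filter (fun p => p.1 = M)).card
      + (S.filter (fun p => ¬ p.1 = M)).card :=
    (Finset.card_filter_add_card_filter_not _).symm
  have hsub : S.filter (fun p => p.1 = M) ⊆ {M} ×ˢ Finset.range n := by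
    intro p hp
    obtain ⟨hpS, hpM⟩ := Finset.mem_filter.mp hp
    obtain ⟨hp1, hp2⟩ := Finset.mem_product.mp (Finset.mem_filter.mp hpS).1
    exact Finset.mem_product.mpr ⟨Finset.mem_singleton.mpr hpM, hp2⟩
  have hc1 : (S.filter (fun p => p.1 = M)).card ≤ n := by
    have hcc := Finset.card_le_card hsub
    simpa using hcc
  have hc2 : ((S.filter (fun p => ¬ p.1 = M)).card : ℝ)
      ≤ ∑ j ∈ Finset.range M, (A j - B (j + 1)) := by
    have hside : ∀ p ∈ S.filter (fun p => ¬ p.1 = M), p.1 ∈ Finset.range M := by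
      intro p hp
      obtain ⟨hpS, hpM⟩ := Finset.mem_filter.mp hp
      obtain ⟨hj, -⟩ := (Finset.mem_filter.mp hpS).2
      exact Finset.mem_range.mpr (by omega)
    have hfib := Finset.card_eq_sum_card_fiberwise hside
    rw [hfib]
    push_cast
    refine Finset.sum_le_sum fun j hj => ?_
    rw [Finset.mem_range] at hj
    have hj1 : j + 1 < M + 1 := by omega
    have hb := fiber_bound T j hj1
      ((S.filter (fun p => ¬ p.1 = M)).filter (fun p => p.1 = j)) ?_
    · simp only [hA, hB, dif_pos hj1, dif_pos (Nat.lt_of_succ_lt hj1)]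
      exact hb
    · intro p hp
      obtain ⟨hpF, hpj⟩ := Finset.mem_filter.mp hp
      obtain ⟨hpS, hpM⟩ := Finset.mem_filter.mp hpF
      obtain ⟨p1, p2⟩ := p
      simp only at hpj hpM
      subst hpj
      obtain ⟨hj', hl, he1, hor⟩ := (Finset.mem_filter.mp hpS).2
      refine ⟨rfl, hl, he1, ?_⟩
      rcases hor with hor | hor
      · exact absurd (by omega) hpM
      · exact fun l' => hor hj1 l'
  have hfinal : ((M + 1 : ℕ) : ℝ) ≤ n * T.length + 2 * n + 2 := by
    have hcast : ((S.card : ℕ) : ℝ)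
        = ((S.filter (fun p => p.1 = M)).card : ℝ)
          + ((S.filter (fun p => ¬ p.1 = M)).card : ℝ) := by
      exact_mod_cast congrArg (fun x : ℕ => (x : ℝ)) hsplitS
    have hc1' : ((S.filter (fun p => p.1 = M)).card : ℝ) ≤ n := by exact_mod_cast hc1
    push_cast
    linarith
  exact hfinal

end CubeComplex.TautString
end TautAux8

/-- For each `n` there is a constant `α > 0` such that in every cube complex of
dimension at most `n` with the `l_∞` metric, every taut `m`-string `Σ` satisfies
`l(Σ) ≥ α m - 1`. -/
theorem tautString_length_lower_bound (n : ℕ) :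
    ∃ α : ℝ, 0 < α ∧ ∀ (C : CubeComplex), C.DimLE n →
      ∀ (m : ℕ) (T : C.TautString m), α * m - 1 ≤ T.length := by
  refine ⟨1 / (2 * n + 4), by positivity, ?_⟩
  intro C hC m T
  have hL0 : 0 ≤ T.length := Finset.sum_nonneg fun k _ => lpDist_top_nonneg _ _
  have key := T.key_count hC
  have hpos : (0 : ℝ) < 2 * n + 4 := by positivity
  rw [sub_le_iff_le_add, div_mul_eq_mul_div, div_le_iff₀ hpos]
  nlinarith [mul_nonneg (Nat.cast_nonneg (α := ℝ) n) hL0, hL0, key]
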